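/- Let F : X' × Y' × Z' → F and G : X'' × Y'' × Z'' → F be functions on finite sets. Then slicerank(F ⊗ G) ≤ slicerank(F) · tensorrank(G), where (F ⊗ G)((x',x''),(y',y''),(z',z'')) = F(x',y',z') G(x'',y'',z''). -/
import Mathlib


open Finset

/-- A slice term is a function of three variables that factors as a
function of two of the variables times a function of the remaining one. -/
def IsSliceTerm {X Y Z 𝔽 : Type*} [Field 𝔽] (t : X → Y → Z → 𝔽) : Prop :=
  (∃ (f : X → Y → 𝔽) (g : Z → 𝔽), ∀ x y z, t x y z = f x y * g z) ∨
  (∃ (f : X → Z → 𝔽) (g : Y → 𝔽), ∀ x y z, t x y z = f x z * g y) ∨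
  (∃ (f : Y → Z → 𝔽) (g : X → 𝔽), ∀ x y z, t x y z = f y z * g x)

/-- The slice rank of a function `X × Y × Z → 𝔽`: the least number of slice
terms needed to express it. -/
noncomputable def sliceRank {X Y Z 𝔽 : Type*} [Field 𝔽] (T : X → Y → Z → 𝔽) : ℕ :=
  sInf {k | ∃ t : Fin k → X → Y → Z → 𝔽,
    (∀ i, IsSliceTerm (t i)) ∧ ∀ x y z, T x y z = ∑ i, t i x y z}

/-- The tensor rank of a function `X × Y × Z → 𝔽`. -/
noncomputable def tensorRank {X Y Z 𝔽 : Type*} [Field 𝔽] (T : X → Y → Z → 𝔽) : ℕ :=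
  sInf {k | ∃ (f : Fin k → X → 𝔽) (g : Fin k → Y → 𝔽) (h : Fin k → Z → 𝔽),
    ∀ x y z, T x y z = ∑ i, f i x * g i y * h i z}

/-- The triangle rank of a function `X × Y × Z → 𝔽`. -/
noncomputable def triangleRank {X Y Z 𝔽 : Type*} [Field 𝔽] (T : X → Y → Z → 𝔽) : ℕ :=
  sInf {k | ∃ (f : Fin k → X → 𝔽) (g : Fin k → Y → 𝔽) (h : Fin k → Z → 𝔽)
      (r : Fin k → Fin k → Fin k → 𝔽),
    ∀ x y z, T x y z = ∑ a : Fin k, ∑ b : Fin k, ∑ c : Fin k,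
      if (a : ℕ) + (b : ℕ) + (c : ℕ) < k then r a b c * f a x * g b y * h c z else 0}

lemma exists_tensor_decomp {X Y Z 𝔽 : Type*} [Field 𝔽] [Fintype X] [Fintype Y]
    (T : X → Y → Z → 𝔽) :
    ∃ k, ∃ (f : Fin k → X → 𝔽) (g : Fin k → Y → 𝔽) (h : Fin k → Z → 𝔽),
    ∀ x y z, T x y z = ∑ i, f i x * g i y * h i z := by
  classical
  refine ⟨Fintype.card (X × Y), fun i x => if x = ((Fintype.equivFin (X × Y)).symm i).1 then 1 else 0,
    fun i y => if y = ((Fintype.equivFin (X × Y)).symm i).2 then 1 else 0,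
    fun i z => T ((Fintype.equivFin (X × Y)).symm i).1 ((Fintype.equivFin (X × Y)).symm i).2 z,
    fun x y z => ?_⟩
  beta_reduce
  rw [Equiv.sum_comp (Fintype.equivFin (X × Y)).symm
    (fun p => (if x = p.1 then (1:𝔽) else 0) * (if y = p.2 then 1 else 0) * T p.1 p.2 z),
    Fintype.sum_prod_type]
  simp [ite_mul, Finset.sum_ite_eq]

lemma tensorRank_mem {X Y Z 𝔽 : Type*} [Field 𝔽] [Fintype X] [Fintype Y]
    (T : X → Y → Z → 𝔽) :
    ∃ (f : Fin (tensorRank T) → X → 𝔽) (g : Fin (tensorRank T) → Y → 𝔽)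
      (h : Fin (tensorRank T) → Z → 𝔽),
    ∀ x y z, T x y z = ∑ i, f i x * g i y * h i z := by
  have hne : {k | ∃ (f : Fin k → X → 𝔽) (g : Fin k → Y → 𝔽) (h : Fin k → Z → 𝔽),
      ∀ x y z, T x y z = ∑ i, f i x * g i y * h i z}.Nonempty :=
    exists_tensor_decomp T
  exact Nat.sInf_mem hne

lemma sliceRank_mem {X Y Z 𝔽 : Type*} [Field 𝔽] [Fintype X] [Fintype Y]
    (T : X → Y → Z → 𝔽) :
    ∃ t : Fin (sliceRank T) → X → Y → Z → 𝔽,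
    (∀ i, IsSliceTerm (t i)) ∧ ∀ x y z, T x y z = ∑ i, t i x y z := by
  have hne : {k | ∃ t : Fin k → X → Y → Z → 𝔽,
      (∀ i, IsSliceTerm (t i)) ∧ ∀ x y z, T x y z = ∑ i, t i x y z}.Nonempty := by
    obtain ⟨k, f, g, h, hfgh⟩ := exists_tensor_decomp T
    exact ⟨k, fun i x y z => f i x * g i y * h i z,
      fun i => Or.inl ⟨fun x y => f i x * g i y, fun z => h i z, fun x y z => by ring⟩, hfgh⟩
  exact Nat.sInf_mem hne

/-- `slicerank (F ⊗ G) ≤ slicerank F · tensorrank G`. -/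
theorem sliceRank_tensorProd_le_sliceRank_mul_tensorRank
    {X' Y' Z' X'' Y'' Z'' 𝔽 : Type*}
    [Fintype X'] [Fintype Y'] [Fintype Z'] [Fintype X''] [Fintype Y''] [Fintype Z'']
    [Field 𝔽] (F : X' → Y' → Z' → 𝔽) (G : X'' → Y'' → Z'' → 𝔽) :
    sliceRank (fun (x : X' × X'') (y : Y' × Y'') (z : Z' × Z'') =>
        F x.1 y.1 z.1 * G x.2 y.2 z.2) ≤ sliceRank F * tensorRank G := by
  obtain ⟨t, ht, htsum⟩ := sliceRank_mem F
  obtain ⟨f, g, h, hsum⟩ := tensorRank_mem G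
  apply Nat.sInf_le
  refine ⟨fun i x y z =>
    t (finProdFinEquiv.symm i).1 x.1 y.1 z.1 *
      (f (finProdFinEquiv.symm i).2 x.2 * g (finProdFinEquiv.symm i).2 y.2 *
        h (finProdFinEquiv.symm i).2 z.2), ?_, ?_⟩
  · intro i
    set p := finProdFinEquiv.symm i
    rcases ht p.1 with ⟨f', g', hfg⟩ | ⟨f', g', hfg⟩ | ⟨f', g', hfg⟩
    · exact Or.inl ⟨fun x y => f' x.1 y.1 * (f p.2 x.2 * g p.2 y.2),
        fun z => g' z.1 * h p.2 z.2, fun x y z => by beta_reduce; rw [hfg]; ring⟩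
    · exact Or.inr (Or.inl ⟨fun x z => f' x.1 z.1 * (f p.2 x.2 * h p.2 z.2),
        fun y => g' y.1 * g p.2 y.2, fun x y z => by beta_reduce; rw [hfg]; ring⟩)
    · exact Or.inr (Or.inr ⟨fun y z => f' y.1 z.1 * (g p.2 y.2 * h p.2 z.2),
        fun x => g' x.1 * f p.2 x.2, fun x y z => by beta_reduce; rw [hfg]; ring⟩)
  · intro x y z
    beta_reduce
    rw [Equiv.sum_comp finProdFinEquiv.symm
      (fun p : Fin (sliceRank F) × Fin (tensorRank G) =>
        t p.1 x.1 y.1 z.1 * (f p.2 x.2 * g p.2 y.2 * h p.2 z.2))]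
    rw [Fintype.sum_prod_type, htsum x.1 y.1 z.1, hsum x.2 y.2 z.2, Finset.sum_mul_sum]
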